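/- There exists a bijection Φ from the set ℚ⁺ of positive rational numbers onto the set ℤ⁺ of positive integers such that whenever a rational r with 0 < r < 1 has the representation r = ∑_{j=1}^k ∏_{i=1}^j (1/n_i) with integers 2 ≤ n_1 ≤ n_2 ≤ ⋯ ≤ n_k, then Φ(r/(1−r)) = ∑_{j=1}^k 2^{n_j + j − 3}. (Equivalently, the map x ↦ ψ(x/(x+1)), where ψ(r) = ∑_{j=1}^k 2^{n_j + j − 3} is computed from the unique such representation of r = x/(x+1), is a bijection from ℚ⁺ to ℤ⁺.) -/

import Mathlib

set_option linter.unusedVariables false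

/-- Value of an Engel-style list: `SL [n₁,…] = 1/n₁ + 1/(n₁n₂) + …`. -/
def SL : List ℕ → ℚ
  | [] => 0
  | n :: t => (1 + SL t) / n

/-- Binary encoding of a list: `EE [n₁,…,n_k] = ∑ 2^(n_j + j - 2)` (0-indexed). -/
def EE : List ℕ → ℕ
  | [] => 0
  | n :: t => 2 ^ (n - 2) + 2 * EE t

/-- `ok m l` : `l` is nondecreasing with entries ≥ `m`. -/
def ok : ℕ → List ℕ → Prop
  | _, [] => True
  | m, n :: t => m ≤ n ∧ ok n t

/-- Engel expansion of `p/q` (intended for `p < q`). -/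
def eng (q : ℕ) (p : ℕ) : List ℕ :=
  if h : p = 0 then [] else
    have hle : ((q + p - 1) / p) * p ≤ q + p - 1 := Nat.div_mul_le_self _ _
    have : (q + p - 1) / p * p - q < p := by omega
    ((q + p - 1) / p) :: eng q ((q + p - 1) / p * p - q)
termination_by p

lemma eng_zero (q : ℕ) : eng q 0 = [] := by rw [eng]; simp

lemma eng_pos' (q p : ℕ) (hp : p ≠ 0) :
    eng q p = ((q + p - 1) / p) :: eng q ((q + p - 1) / p * p - q) := by
  rw [eng]; simp [hp]

lemma ok_weaken : ∀ (l : List ℕ) (m k : ℕ), ok m l → k ≤ m → ok k l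
  | [], _, _, _, _ => trivial
  | n :: t, m, k, h, hk => ⟨le_trans hk h.1, h.2⟩

lemma SL_nonneg : ∀ (l : List ℕ) (m : ℕ), 2 ≤ m → ok m l → 0 ≤ SL l
  | [], _, _, _ => le_refl 0
  | n :: t, m, hm, h => by
    have h2 : (2:ℚ) ≤ n := by exact_mod_cast le_trans hm h.1
    have ht := SL_nonneg t n (le_trans hm h.1) h.2
    simp only [SL]; positivity

lemma SL_lt : ∀ (l : List ℕ) (m : ℕ), 2 ≤ m → ok m l → SL l < 1 / ((m:ℚ) - 1)
  | [], m, hm, _ => by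
    have : (1:ℚ) ≤ (m:ℚ) - 1 := by
      have : (2:ℚ) ≤ m := by exact_mod_cast hm
      linarith
    simp only [SL]; positivity
  | n :: t, m, hm, h => by
    have hmn : 2 ≤ n := le_trans hm h.1
    have ht := SL_lt t n hmn h.2
    have hn2 : (2:ℚ) ≤ (n:ℚ) := by exact_mod_cast hmn
    have hm2 : (2:ℚ) ≤ (m:ℚ) := by exact_mod_cast hm
    have hmn' : (m:ℚ) ≤ n := by exact_mod_cast h.1
    simp only [SL]
    rw [div_lt_iff₀ (by linarith)]
    have hne : (n:ℚ)-1 ≠ 0 := by linarith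
    have h2 : (1:ℚ) + 1/((n:ℚ)-1) = (n:ℚ)/((n:ℚ)-1) := by field_simp; ring
    have h3 : (n:ℚ)/((n:ℚ)-1) ≤ (n:ℚ)/((m:ℚ)-1) := by gcongr <;> linarith
    have h4 : (n:ℚ)/((m:ℚ)-1) = 1/((m:ℚ)-1) * n := by ring
    linarith

lemma SL_ge (n : ℕ) (t : List ℕ) (hn : 2 ≤ n) (h : ok n t) : 1 / (n:ℚ) ≤ SL (n :: t) := by
  have ht := SL_nonneg t n hn h
  have hn2 : (2:ℚ) ≤ (n:ℚ) := by exact_mod_cast hn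
  simp only [SL]
  gcongr <;> linarith

lemma SL_pos (n : ℕ) (t : List ℕ) (hn : 2 ≤ n) (h : ok n t) : 0 < SL (n :: t) := by
  have hn2 : (2:ℚ) ≤ (n:ℚ) := by exact_mod_cast hn
  have : (0:ℚ) < 1/(n:ℚ) := by positivity
  linarith [SL_ge n t hn h]

lemma SL_uniq : ∀ (l l' : List ℕ), ok 2 l → ok 2 l' → SL l = SL l' → l = l'
  | [], [], _, _, _ => rfl
  | [], n :: t, _, h', he => absurd he.symm (ne_of_gt (by simpa [SL] using SL_pos n t h'.1 h'.2))
  | n :: t, [], h, _, he => absurd he (ne_of_gt (by simpa [SL] using SL_pos n t h.1 h.2))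
  | n :: t, n' :: t', h, h', he => by
    have hn : 2 ≤ n := h.1
    have hn' : 2 ≤ n' := h'.1
    have b1 := SL_ge n t hn h.2
    have b2 := SL_lt (n::t) n hn ⟨le_refl n, h.2⟩
    have b3 := SL_ge n' t' hn' h'.2
    have b4 := SL_lt (n'::t') n' hn' ⟨le_refl n', h'.2⟩
    have hnq : (2:ℚ) ≤ (n:ℚ) := by exact_mod_cast hn
    have hnq' : (2:ℚ) ≤ (n':ℚ) := by exact_mod_cast hn'
    have key : ∀ a b : ℕ, 2 ≤ a → 2 ≤ b → 1/(a:ℚ) < 1/((b:ℚ)-1) → b - 1 < a := by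
      intro a b ha hb hab
      have haq : (2:ℚ) ≤ (a:ℚ) := by exact_mod_cast ha
      have hbq : (2:ℚ) ≤ (b:ℚ) := by exact_mod_cast hb
      have : (b:ℚ) - 1 < a := by
        by_contra hc
        push_neg at hc
        have := one_div_le_one_div_of_le (by linarith : (0:ℚ) < (a:ℚ)) hc
        linarith
      have hba : (b:ℚ) < a + 1 := by linarith
      have : b < a + 1 := by exact_mod_cast hba
      omega
    have c1 : 1/(n:ℚ) < 1/((n':ℚ)-1) := by rw [he] at b1; exact lt_of_le_of_lt b1 b4
    have c2 : 1/(n':ℚ) < 1/((n:ℚ)-1) := by rw [← he] at b3; exact lt_of_le_of_lt b3 b2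
    have e1 : n' - 1 < n := key n n' hn hn' c1
    have e2 : n - 1 < n' := key n' n hn' hn c2
    have hnn : n = n' := by omega
    subst hnn
    have hSt : SL t = SL t' := by
      simp only [SL] at he
      have : (0:ℚ) < n := by linarith
      field_simp at he
      linarith
    rw [SL_uniq t t' (ok_weaken t n 2 h.2 hn) (ok_weaken t' n 2 h'.2 hn') hSt]

/-- Main correctness of the Engel algorithm. -/
lemma eng_spec : ∀ p q m : ℕ, 0 < q → p < q → (0 < p → m * p ≤ q + p - 1) →
    SL (eng q p) = (p : ℚ) / q ∧ ok m (eng q p) := by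
  intro p
  induction p using Nat.strong_induction_on with
  | _ p IH =>
    intro q m hq hpq hm
    rcases Nat.eq_zero_or_pos p with h0 | hp
    · subst h0; rw [eng_zero]; exact ⟨by simp [SL], trivial⟩
    · set n := (q + p - 1) / p with hn
      have hnp_le : n * p ≤ q + p - 1 := Nat.div_mul_le_self _ _
      have hmod : (q + p - 1) % p < p := Nat.mod_lt _ hp
      have hdm : n * p + (q + p - 1) % p = q + p - 1 := by
        rw [mul_comm]; exact Nat.div_add_mod _ _
      have hnp_ge : q ≤ n * p := by omega
      have hmn : 0 < p → m ≤ n := fun _ => Nat.le_div_iff_mul_le hp |>.2 (hm hp)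
      set p' := n * p - q with hp'
      have hp'lt : p' < p := by omega
      have hp'q : p' < q := by omega
      have hn2 : 2 ≤ n := by
        rw [hn, Nat.le_div_iff_mul_le hp]; omega
      have hrec : 0 < p' → n * p' ≤ q + p' - 1 := by
        intro hp'pos
        have e1 : (n - 1) * p = n * p - p := by rw [Nat.sub_mul, one_mul]
        have e2 : (n - 1) * p' = n * p' - p' := by rw [Nat.sub_mul, one_mul]
        have e3 : p' ≤ n * p' := Nat.le_mul_of_pos_left _ (by omega)
        have h1 : (n - 1) * p ≤ q - 1 := by omega
        have h2 : (n - 1) * p' ≤ (n - 1) * p := Nat.mul_le_mul_left _ (le_of_lt hp'lt)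
        omega
      obtain ⟨hSL', hok'⟩ := IH p' hp'lt q n hq hp'q hrec
      rw [eng_pos' q p (by omega)]
      constructor
      · simp only [SL, ← hn, ← hp', hSL']
        have hqQ : (q:ℚ) ≠ 0 := by positivity
        have hnQ : (n:ℚ) ≠ 0 := by positivity
        have hcast : ((p' : ℕ) : ℚ) = (n:ℚ) * p - q := by
          rw [hp']
          push_cast [Nat.cast_sub hnp_ge]
          ring
        rw [hcast]
        field_simp
        ring
      · exact ⟨by rcases Nat.eq_zero_or_pos p with h|h; omega; exact hmn h, hok'⟩

/-- Unique 2-adic decomposition. -/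
lemma two_adic_uniq : ∀ e a e' a' : ℕ, 2^e * (2*a+1) = 2^e' * (2*a'+1) → e = e' ∧ a = a' := by
  intro e
  induction e with
  | zero =>
    intro a e' a' h
    cases e' with
    | zero => simp at h; omega
    | succ e' =>
      rw [pow_succ, mul_comm ((2:ℕ)^e') 2, mul_assoc] at h
      simp at h; omega
  | succ e IH =>
    intro a e' a' h
    cases e' with
    | zero =>
      rw [pow_succ, mul_comm ((2:ℕ)^e) 2, mul_assoc] at h
      simp at h; omega
    | succ e' =>
      have h2 : 2^e * (2*a+1) = 2^e' * (2*a'+1) := by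
        rw [pow_succ, pow_succ, mul_comm ((2:ℕ)^e) 2, mul_comm ((2:ℕ)^e') 2,
          mul_assoc, mul_assoc] at h
        exact Nat.eq_of_mul_eq_mul_left (by norm_num) h
      obtain ⟨h1, h2⟩ := IH a e' a' h2
      exact ⟨by omega, h2⟩

lemma two_adic_exists : ∀ N : ℕ, 0 < N → ∃ e a, N = 2^e * (2*a+1) := by
  intro N
  induction N using Nat.strong_induction_on with
  | _ N IH =>
    intro hN
    rcases Nat.even_or_odd N with ⟨M, hM⟩ | ⟨M, hM⟩
    · obtain ⟨e, a, hea⟩ := IH M (by omega) (by omega)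
      exact ⟨e+1, a, by rw [pow_succ, mul_comm ((2:ℕ)^e) 2, mul_assoc]; omega⟩
    · exact ⟨0, M, by omega⟩

lemma EE_dvd : ∀ (l : List ℕ) (m : ℕ), ok m l → 2^(m-2) ∣ EE l
  | [], _, _ => dvd_zero _
  | n :: t, m, h => by
    have ht := EE_dvd t n h.2
    have h1 : 2^(m-2) ∣ 2^(n-2) := pow_dvd_pow 2 (Nat.sub_le_sub_right h.1 2)
    exact dvd_add h1 (Dvd.dvd.mul_left (h1.trans ht) 2)

lemma EE_factor (n : ℕ) (t : List ℕ) (hn : 2 ≤ n) (h : ok n t) :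
    ∃ a, EE (n :: t) = 2^(n-2) * (2*a+1) := by
  obtain ⟨a, ha⟩ := EE_dvd t n h
  exact ⟨a, by simp only [EE, ha]; ring⟩

lemma EE_inj : ∀ (l l' : List ℕ), ok 2 l → ok 2 l' → EE l = EE l' → l = l'
  | [], [], _, _, _ => rfl
  | [], n :: t, _, h', he => by
    exfalso; simp only [EE] at he
    have : 0 < 2^(n-2) := pow_pos (by norm_num) _
    omega
  | n :: t, [], h, _, he => by
    exfalso; simp only [EE] at he
    have : 0 < 2^(n-2) := pow_pos (by norm_num) _
    omega
  | n :: t, n' :: t', h, h', he => by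
    obtain ⟨a, ha⟩ := EE_factor n t h.1 h.2
    obtain ⟨a', ha'⟩ := EE_factor n' t' h'.1 h'.2
    rw [ha, ha'] at he
    obtain ⟨he1, he2⟩ := two_adic_uniq _ _ _ _ he
    have hnn : n = n' := by have := h.1; have := h'.1; omega
    subst hnn
    have hEt : EE t = EE t' := by
      simp only [EE] at ha ha'
      omega
    rw [EE_inj t t' (ok_weaken t n 2 h.2 h.1) (ok_weaken t' n 2 h'.2 h'.1) hEt]

lemma EE_surj : ∀ N m : ℕ, 2 ≤ m → 2^(m-2) ∣ N → ∃ l, ok m l ∧ EE l = N := by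
  intro N
  induction N using Nat.strong_induction_on with
  | _ N IH =>
    intro m hm hdvd
    rcases Nat.eq_zero_or_pos N with h0 | hN
    · exact ⟨[], trivial, by simp [EE, h0]⟩
    · obtain ⟨e, a, hea⟩ := two_adic_exists N hN
      have hme : m - 2 ≤ e := by
        have hcop : Nat.Coprime (2^(m-2)) (2*a+1) := by
          apply Nat.Coprime.pow_left
          rw [Nat.coprime_two_left]
          exact ⟨a, by ring⟩
        have hd2 : 2^(m-2) ∣ 2^e := by
          have : 2^(m-2) ∣ 2^e * (2*a+1) := hea ▸ hdvd
          exact hcop.dvd_of_dvd_mul_right this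
        exact (Nat.pow_dvd_pow_iff_le_right (by norm_num)).1 hd2
      set n := e + 2 with hn
      have h2e : 0 < 2^e := pow_pos (by norm_num) _
      have hlt : 2^e * a < N := by
        rw [hea]; nlinarith
      obtain ⟨t, hokt, hEt⟩ := IH (2^e * a) hlt n (by omega)
        (by rw [show n - 2 = e by omega]; exact Dvd.dvd.mul_right dvd_rfl a)
      refine ⟨n :: t, ⟨by omega, hokt⟩, ?_⟩
      simp only [EE, hEt, show n - 2 = e by omega, hea]
      ring

lemma sorted_ok : ∀ (l : List ℕ) (m : ℕ), l.Pairwise (· ≤ ·) → (∀ x ∈ l, m ≤ x) → ok m l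
  | [], _, _, _ => trivial
  | n :: t, m, hs, hb => by
    rw [List.pairwise_cons] at hs
    exact ⟨hb n (by simp), sorted_ok t n hs.2 hs.1⟩

lemma sum_eq_SL : ∀ l : List ℕ,
    (∑ j ∈ Finset.range l.length, ((l.take (j + 1)).map fun n => (1 : ℚ) / n).prod) = SL l
  | [] => by simp [SL]
  | n :: t => by
    have IH := sum_eq_SL t
    simp only [List.length_cons]
    rw [Finset.sum_range_succ']
    have h0 : (((n :: t).take 1).map fun k => (1 : ℚ) / k).prod = 1 / n := by simp
    have hstep : ∀ i, (((n :: t).take (i + 1 + 1)).map fun k => (1 : ℚ) / k).prod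
        = (1 / n) * ((t.take (i + 1)).map fun k => (1 : ℚ) / k).prod := by
      intro i
      simp [List.take_succ_cons]
    simp only [hstep, h0, ← Finset.mul_sum, IH]
    simp only [SL]
    ring

lemma EE_sum : ∀ l : List ℕ, (∀ x ∈ l, 2 ≤ x) →
    (∑ j : Fin l.length, 2 ^ (l.get j + ((j : ℕ) + 1) - 3)) = EE l
  | [] => by simp [EE]
  | n :: t => by
    intro hb
    have IH := EE_sum t (fun x hx => hb x (by simp [hx]))
    simp only [List.length_cons]
    rw [Fin.sum_univ_succ]
    have hterm : ∀ i : Fin t.length,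
        (2:ℕ) ^ ((n::t).get i.succ + (((i.succ : Fin (t.length+1)) : ℕ) + 1) - 3)
          = 2 * 2 ^ (t.get i + ((i : ℕ) + 1) - 3) := by
      intro i
      have h2 : 2 ≤ t.get i := hb _ (List.mem_cons_of_mem n (by simpa using List.get_mem t i.1 i.2))
      have hg : (n :: t).get i.succ = t.get i := rfl
      rw [hg, ← pow_succ']
      congr 1
      simp only [Fin.val_succ]
      omega
    simp only [hterm]
    rw [← Finset.mul_sum, IH]
    have hget0 : (n::t).get (0 : Fin (t.length+1)) = n := rfl
    have hexp : n + (((0 : Fin (t.length+1)) : ℕ) + 1) - 3 = n - 2 := by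
      simp only [Fin.val_zero]; omega
    simp only [hget0, hexp, EE]

lemma EE_pos (n : ℕ) (t : List ℕ) : 0 < EE (n :: t) := by
  have : 0 < 2^(n-2) := pow_pos (by norm_num) _
  simp only [EE]; omega

/-- The Engel list attached to a positive rational `x`, via `r = x/(x+1)`. -/
def engOf (x : ℚ) : List ℕ := eng (x/(x+1)).den (x/(x+1)).num.toNat

lemma engOf_spec (x : ℚ) (hx : 0 < x) :
    SL (engOf x) = x/(x+1) ∧ ok 2 (engOf x) ∧ engOf x ≠ [] := by
  set r := x/(x+1) with hr
  have hx1 : 0 < x + 1 := by linarith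
  have hr0 : 0 < r := div_pos hx hx1
  have hr1 : r < 1 := by
    rw [hr, div_lt_one hx1]; linarith
  have hnum : 0 < r.num := Rat.num_pos.2 hr0
  have hden : 0 < r.den := r.pos
  have hlt : r.num < (r.den : ℤ) := by
    have hdq : (0:ℚ) < (r.den : ℚ) := by exact_mod_cast hden
    have := Rat.num_div_den r
    rw [← this, div_lt_one hdq] at hr1
    exact_mod_cast hr1
  set p := r.num.toNat with hp
  set q := r.den with hq
  have hpq : p < q := by omega
  have hppos : 0 < p := by omega
  obtain ⟨hSL, hok⟩ := eng_spec p q 2 hden hpq (fun _ => by omega)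
  have hcast : ((p : ℕ) : ℚ) = (r.num : ℚ) := by
    rw [hp]; exact_mod_cast congrArg (Int.cast : ℤ → ℚ) (Int.toNat_of_nonneg (le_of_lt hnum))
  refine ⟨?_, hok, ?_⟩
  · rw [show engOf x = eng q p from rfl, hSL, hcast, hq]
    exact Rat.num_div_den r
  · rw [show engOf x = eng q p from rfl, eng_pos' q p (by omega)]
    simp

lemma engOf_uniq (x : ℚ) (hx : 0 < x) (l : List ℕ) (hok : ok 2 l)
    (hSL : SL l = x/(x+1)) : engOf x = l := by
  obtain ⟨h1, h2, _⟩ := engOf_spec x hx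
  exact SL_uniq _ _ h2 hok (h1.trans hSL.symm)

/-- There is a bijection `Φ : ℚ⁺ → ℤ⁺` such that whenever `0 < r < 1` has the representation
`r = ∑_{j=1}^k ∏_{i=1}^j (1/n_i)` with integers `2 ≤ n_1 ≤ ⋯ ≤ n_k` (encoded as a nonempty
sorted list `l`), then `Φ(r/(1−r)) = ∑_{j=1}^k 2^{n_j + j − 3}`. -/
theorem stmt_19 :
    ∃ Φ : {q : ℚ // 0 < q} → ℕ+,
      Function.Bijective Φ ∧
      ∀ (r : ℚ), 0 < r → r < 1 →
        ∀ l : List ℕ, l ≠ [] → l.Pairwise (· ≤ ·) → (∀ x ∈ l, 2 ≤ x) →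
          r = (∑ j ∈ Finset.range l.length, ((l.take (j + 1)).map fun n => (1 : ℚ) / n).prod) →
          ∀ x : {q : ℚ // 0 < q}, (x : ℚ) = r / (1 - r) →
            ((Φ x : ℕ+) : ℕ) = ∑ j : Fin l.length, 2 ^ (l.get j + ((j : ℕ) + 1) - 3) := by
  refine ⟨fun x => ⟨EE (engOf x.1), ?_⟩, ⟨?_, ?_⟩, ?_⟩
  · obtain ⟨_, _, hne⟩ := engOf_spec x.1 x.2
    obtain ⟨n, t, hnt⟩ : ∃ n t, engOf x.1 = n :: t := by
      cases h : engOf x.1 with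
      | nil => exact absurd h hne
      | cons n t => exact ⟨n, t, rfl⟩
    rw [hnt]
    exact EE_pos n t
  · -- injective
    intro x y hxy
    have hEE : EE (engOf x.1) = EE (engOf y.1) := congrArg (Subtype.val) hxy
    obtain ⟨hSx, hox, _⟩ := engOf_spec x.1 x.2
    obtain ⟨hSy, hoy, _⟩ := engOf_spec y.1 y.2
    have hl : engOf x.1 = engOf y.1 := EE_inj _ _ hox hoy hEE
    have hS : x.1/(x.1+1) = y.1/(y.1+1) := by rw [← hSx, ← hSy, hl]
    have hx1 : x.1 + 1 ≠ 0 := by have := x.2; positivity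
    have hy1 : y.1 + 1 ≠ 0 := by have := y.2; positivity
    have : x.1 = y.1 := by
      field_simp at hS
      linarith
    exact Subtype.ext this
  · -- surjective
    intro b
    obtain ⟨l, hok, hEl⟩ := EE_surj b.1 2 (le_refl 2) (by simp)
    obtain ⟨n, t, hnt⟩ : ∃ n t, l = n :: t := by
      cases h : l with
      | nil => exfalso; rw [h] at hEl; simp [EE] at hEl; exact absurd hEl.symm (ne_of_gt b.2)
      | cons n t => exact ⟨n, t, rfl⟩
    have hr0 : 0 < SL l := by rw [hnt]; exact SL_pos n t (hnt ▸ hok).1 (hnt ▸ hok).2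
    have hr1 : SL l < 1 := by
      have := SL_lt l 2 (le_refl 2) hok
      norm_num at this
      exact this
    set r := SL l with hrdef
    have h1r : 0 < 1 - r := by linarith
    refine ⟨⟨r / (1 - r), div_pos hr0 h1r⟩, ?_⟩
    have hxval : (r / (1-r)) / (r / (1-r) + 1) = r := by
      have hne : (1:ℚ) - r ≠ 0 := ne_of_gt h1r
      field_simp
      ring
    have huniq : engOf (r / (1-r)) = l :=
      engOf_uniq _ (div_pos hr0 h1r) l hok (by rw [hxval])
    apply Subtype.ext
    show EE (engOf (r / (1-r))) = b.1
    rw [huniq, hEl]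
  · -- the formula
    intro r hr0 hr1 l hne hs hb hrepr x hx
    have hok : ok 2 l := sorted_ok l 2 hs hb
    have hSLl : SL l = r := by rw [hrepr, sum_eq_SL]
    have h1r : 0 < 1 - r := by linarith
    have hxval : x.1/(x.1+1) = r := by
      rw [hx]
      have hne' : (1:ℚ) - r ≠ 0 := ne_of_gt h1r
      field_simp
      ring
    have huniq : engOf x.1 = l := engOf_uniq x.1 x.2 l hok (by rw [hSLl, hxval])
    show EE (engOf x.1) = _
    rw [huniq, EE_sum l hb]
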